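/- In the quotient ring B/o of bounded real sequences modulo the ideal o, the class d of the sequence n ↦ 1/(n+1) is a nonzero nilpotent element: d ≠ 0 and d² = 0. (Hence B/o has nonzero nilpotent elements and zero divisors.) -/

import Mathlib

open Filter

def littleO : Set (ℕ → ℝ) :=
  {f : ℕ → ℝ | Filter.Tendsto (fun n : ℕ => (n : ℝ) * f n) Filter.atTop (nhds 0)}

/-- The subring of bounded real sequences. -/
def BddSeq : Subring (ℕ → ℝ) where
  carrier := {f : ℕ → ℝ | ∃ C : ℝ, ∀ n, |f n| ≤ C}
  zero_mem' := ⟨0, fun n => by simp⟩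
  one_mem' := ⟨1, fun n => by simp⟩
  add_mem' := by
    rintro x y ⟨C, hC⟩ ⟨D, hD⟩
    exact ⟨C + D, fun n => (abs_add_le _ _).trans (add_le_add (hC n) (hD n))⟩
  neg_mem' := by
    rintro x ⟨C, hC⟩
    exact ⟨C, fun n => by simpa using hC n⟩
  mul_mem' := by
    rintro x y ⟨C, hC⟩ ⟨D, hD⟩
    refine ⟨C * D, fun n => ?_⟩
    rw [Pi.mul_apply, abs_mul]
    exact mul_le_mul (hC n) (hD n) (abs_nonneg _) ((abs_nonneg _).trans (hC n))

/-- `littleO` as an ideal of the ring of bounded sequences. -/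
def littleOIdeal : Ideal BddSeq where
  carrier := {f : BddSeq | (f : ℕ → ℝ) ∈ littleO}
  zero_mem' := by simp [littleO]
  add_mem' := by
    rintro x y hx hy
    have := hx.add hy
    simp only [littleO, Set.mem_setOf_eq] at *
    simpa [mul_add] using this
  smul_mem' := by
    rintro c x hx
    obtain ⟨C, hC⟩ := c.2
    have h1 : Filter.Tendsto (fun n : ℕ => C * |(n : ℝ) * (x : ℕ → ℝ) n|)
        Filter.atTop (nhds 0) := by
      have := hx.abs.const_mul C
      simpa using this
    refine squeeze_zero_norm (fun n => ?_) h1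
    have hcx : ((c • x : BddSeq) : ℕ → ℝ) n = (c : ℕ → ℝ) n * (x : ℕ → ℝ) n := rfl
    rw [hcx]
    have : ‖(n : ℝ) * ((c : ℕ → ℝ) n * (x : ℕ → ℝ) n)‖
        = |(c : ℕ → ℝ) n| * |(n : ℝ) * (x : ℕ → ℝ) n| := by
      rw [Real.norm_eq_abs, ← abs_mul]; ring_nf
    rw [this]
    exact mul_le_mul_of_nonneg_right (hC n) (abs_nonneg _)

/-- Giordano's ambient ring ℝ̃ = B/o. -/
abbrev GiordanoAmbient : Type := BddSeq ⧸ littleOIdeal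

/-- Little-oh polynomials. -/
def LittleOhPoly (x : ℕ → ℝ) : Prop :=
  ∃ (k : ℕ) (r : ℝ) (α a : Fin k → ℝ), (∀ i, 0 ≤ a i) ∧
    (fun n : ℕ => x n - r - ∑ i, α i * (n : ℝ) ^ (-(a i))) ∈ littleO

lemma invSucc_bdd : (fun n : ℕ => 1 / ((n : ℝ) + 1)) ∈ BddSeq := by
  refine ⟨1, fun n => ?_⟩
  have h : (0:ℝ) < (n : ℝ) + 1 := by positivity
  rw [abs_of_pos (by positivity), div_le_one h]
  linarith

theorem giordano_ambient_nilpotent :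
    Ideal.Quotient.mk littleOIdeal (⟨fun n : ℕ => 1 / ((n : ℝ) + 1), invSucc_bdd⟩ : BddSeq) ≠ 0 ∧
    (Ideal.Quotient.mk littleOIdeal (⟨fun n : ℕ => 1 / ((n : ℝ) + 1), invSucc_bdd⟩ : BddSeq)) ^ 2 = 0 := by
  constructor
  · intro h
    rw [Ideal.Quotient.eq_zero_iff_mem] at h
    have h' : Filter.Tendsto (fun n : ℕ => (n : ℝ) * (1 / ((n:ℝ) + 1)))
        Filter.atTop (nhds 0) := h
    have h1 : Filter.Tendsto (fun n : ℕ => (n : ℝ) * (1 / ((n:ℝ) + 1)))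
        Filter.atTop (nhds 1) := by
      have : (fun n : ℕ => (n : ℝ) * (1 / ((n:ℝ) + 1)))
          = (fun n : ℕ => 1 - 1 / ((n:ℝ) + 1)) := by
        funext n
        have hn : ((n:ℝ) + 1) ≠ 0 := by positivity
        field_simp
        ring
      rw [this]
      have := tendsto_one_div_add_atTop_nhds_zero_nat (𝕜 := ℝ)
      simpa using (tendsto_const_nhds (x := (1:ℝ))).sub this
    exact one_ne_zero (α := ℝ) (tendsto_nhds_unique h1 h')
  · rw [sq, ← map_mul, Ideal.Quotient.eq_zero_iff_mem]
    show Filter.Tendsto _ Filter.atTop (nhds 0)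
    have hb : Filter.Tendsto (fun n : ℕ => 1 / ((n:ℝ) + 1)) Filter.atTop (nhds 0) :=
      tendsto_one_div_add_atTop_nhds_zero_nat
    refine squeeze_zero_norm (fun n => ?_) hb
    have hn : (0:ℝ) < (n:ℝ) + 1 := by positivity
    have : (n : ℝ) * ((1 / ((n:ℝ) + 1)) * (1 / ((n:ℝ) + 1))) = (n:ℝ) / (((n:ℝ)+1)*((n:ℝ)+1)) := by
      have hn : ((n:ℝ) + 1) ≠ 0 := by positivity
      field_simp
    show ‖(n : ℝ) * ((1 / ((n:ℝ) + 1)) * (1 / ((n:ℝ) + 1)))‖ ≤ 1 / ((n:ℝ)+1)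
    rw [this, Real.norm_eq_abs, abs_of_nonneg (by positivity)]
    rw [div_le_div_iff₀ (by positivity) hn]
    nlinarith [hn]
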